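/- For the complete graph K_n with n even and n ≥ 2, mp(K_n) = n − 1. -/

import Mathlib

open SimpleGraph

/-- An almost-perfect matching: a matching covering all vertices except exactly one. -/
def SimpleGraph.Subgraph.IsAlmostPerfectMatching {V : Type*} {G : SimpleGraph V}
    (M : G.Subgraph) : Prop :=
  M.IsMatching ∧ ∃ v : V, M.verts = {v}ᶜ

/-- `G` has a perfect matching or an almost-perfect matching. -/
def SimpleGraph.HasGoodMatching {V : Type*} (G : SimpleGraph V) : Prop :=
  (∃ M : G.Subgraph, M.IsPerfectMatching) ∨ (∃ M : G.Subgraph, M.IsAlmostPerfectMatching)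

/-- The matching preclusion number of `G`. -/
noncomputable def SimpleGraph.mp {V : Type*} [Fintype V] (G : SimpleGraph V) : ℕ :=
  sInf { k | ∃ F : Finset (Sym2 V), ↑F ⊆ G.edgeSet ∧ F.card = k ∧
    ¬ (G.deleteEdges ↑F).HasGoodMatching }

private lemma sym2_exists_mem {V : Type*} (e : Sym2 V) : ∃ a, a ∈ e :=
  ⟨e.out.1, Sym2.out_fst_mem e⟩

private lemma exists_good_partner {V : Type*} [DecidableEq V] (s : Finset V) (F : Finset (Sym2 V))
    (a : V) (hcard : F.card + 2 ≤ s.card) :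
    ∃ b ∈ s.erase a, s(a, b) ∉ F := by
  by_contra h
  push_neg at h
  have hle : (s.erase a).card ≤ F.card :=
    Finset.card_le_card_of_injOn (fun b => s(a, b)) h
      (fun x _ y _ hxy => Sym2.congr_right.mp hxy)
  have h1 : s.card - 1 ≤ (s.erase a).card := Finset.pred_card_le_card_erase
  omega

private lemma key {V : Type*} [DecidableEq V] :
    ∀ (t : ℕ) (s : Finset V) (F : Finset (Sym2 V)),
      s.card = 2 * t →
      (∀ e ∈ F, ∀ v ∈ e, v ∈ s) →
      (F.card + 2 ≤ s.card ∨ F = ∅) →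
      ∃ P : Finset (Sym2 V),
        (∀ e ∈ P, e ∉ F) ∧
        (∀ e ∈ P, ¬ e.IsDiag) ∧
        (∀ e ∈ P, ∀ v ∈ e, v ∈ s) ∧
        (∀ v ∈ s, ∃! e, e ∈ P ∧ v ∈ e) := by
  intro t
  induction t with
  | zero =>
      intro s F hs hFs _
      have hse : s = ∅ := Finset.card_eq_zero.mp (by omega)
      refine ⟨∅, by simp, by simp, by simp, ?_⟩
      intro v hv
      rw [hse] at hv
      simp at hv
  | succ t ih =>
      intro s F hs hFs hcard
      suffices h : ∃ a, a ∈ s ∧ ∃ b, b ∈ s ∧ a ≠ b ∧ s(a, b) ∉ F ∧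
          ((F.filter (fun e => a ∉ e ∧ b ∉ e)).card + 2 ≤ s.card - 2 ∨
            F.filter (fun e => a ∉ e ∧ b ∉ e) = ∅) by
        obtain ⟨a, ha, b, hb, hab, habF, hcard'⟩ := h
        set s' := (s.erase a).erase b with hs'def
        set F' := F.filter (fun e => a ∉ e ∧ b ∉ e) with hF'def
        have hbs : b ∈ s.erase a := Finset.mem_erase.mpr ⟨Ne.symm hab, hb⟩
        have hs'card : s'.card = 2 * t := by
          rw [hs'def, Finset.card_erase_of_mem hbs, Finset.card_erase_of_mem ha]
          omega
        have has' : a ∉ s' := fun hmem =>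
          Finset.notMem_erase a s (Finset.mem_of_mem_erase hmem)
        have hbs' : b ∉ s' := Finset.notMem_erase b _
        have hF's : ∀ e ∈ F', ∀ v ∈ e, v ∈ s' := by
          intro e he v hv
          obtain ⟨heF, hane, hbne⟩ := Finset.mem_filter.mp he
          exact Finset.mem_erase.mpr ⟨fun h => hbne (h ▸ hv),
            Finset.mem_erase.mpr ⟨fun h => hane (h ▸ hv), hFs e heF v hv⟩⟩
        obtain ⟨P', hP'F, hP'd, hP's, hP'u⟩ := ih s' F' hs'card hF's (by
          rcases hcard' with h | h
          · exact Or.inl (by omega)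
          · exact Or.inr h)
        refine ⟨insert s(a, b) P', ?_, ?_, ?_, ?_⟩
        · intro e he
          rcases Finset.mem_insert.mp he with rfl | he'
          · exact habF
          · intro heF
            refine hP'F e he' (Finset.mem_filter.mpr ⟨heF, ?_, ?_⟩)
            · exact fun h => has' (hP's e he' a h)
            · exact fun h => hbs' (hP's e he' b h)
        · intro e he
          rcases Finset.mem_insert.mp he with rfl | he'
          · simpa using hab
          · exact hP'd e he'
        · intro e he v hv
          rcases Finset.mem_insert.mp he with rfl | he'
          · rcases Sym2.mem_iff.mp hv with rfl | rfl
            · exact ha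
            · exact hb
          · exact Finset.mem_of_mem_erase (Finset.mem_of_mem_erase (hP's e he' v hv))
        · intro v hv
          by_cases hvab : v = a ∨ v = b
          · refine ⟨s(a, b), ⟨Finset.mem_insert_self _ _, ?_⟩, ?_⟩
            · rcases hvab with rfl | rfl
              · exact Sym2.mem_mk_left _ _
              · exact Sym2.mem_mk_right _ _
            · rintro e ⟨heP, hve⟩
              rcases Finset.mem_insert.mp heP with rfl | he'
              · rfl
              · exfalso
                have := hP's e he' v hve
                rcases hvab with rfl | rfl
                · exact has' this
                · exact hbs' this
          · push_neg at hvab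
            have hvs' : v ∈ s' := Finset.mem_erase.mpr ⟨hvab.2,
              Finset.mem_erase.mpr ⟨hvab.1, hv⟩⟩
            obtain ⟨e, ⟨heP', hve⟩, hu⟩ := hP'u v hvs'
            refine ⟨e, ⟨Finset.mem_insert_of_mem heP', hve⟩, ?_⟩
            rintro e' ⟨he'P, hve'⟩
            rcases Finset.mem_insert.mp he'P with rfl | h
            · exfalso
              rcases Sym2.mem_iff.mp hve' with rfl | rfl
              · exact hvab.1 rfl
              · exact hvab.2 rfl
            · exact hu e' ⟨h, hve'⟩
      -- now find the pair (a, b)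
      by_cases hFe : F = ∅
      · have h2c : 1 < s.card := by omega
        obtain ⟨a, b, ha, hb, hab⟩ := Finset.one_lt_card_iff.mp h2c
        exact ⟨a, ha, b, hb, hab, by simp [hFe], Or.inr (by simp [hFe])⟩
      · have hcF : F.card + 2 ≤ s.card := hcard.resolve_right hFe
        by_cases hA : ∃ a, 2 ≤ (F.filter (fun e => a ∈ e)).card
        · obtain ⟨a, hda⟩ := hA
          have ha : a ∈ s := by
            obtain ⟨e, he⟩ := Finset.card_pos.mp (by omega :
              0 < (F.filter (fun e => a ∈ e)).card)
            obtain ⟨heF, hae⟩ := Finset.mem_filter.mp he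
            exact hFs e heF a hae
          obtain ⟨b, hbs, hbF⟩ := exists_good_partner s F a hcF
          refine ⟨a, ha, b, Finset.mem_of_mem_erase hbs,
            Ne.symm (Finset.mem_erase.mp hbs).1, hbF, Or.inl ?_⟩
          have hsub : F.filter (fun e => a ∉ e ∧ b ∉ e) ⊆ F.filter (fun e => ¬ a ∈ e) := by
            intro e he
            obtain ⟨heF, hane, _⟩ := Finset.mem_filter.mp he
            exact Finset.mem_filter.mpr ⟨heF, hane⟩
          have h1 : (F.filter (fun e => a ∈ e)).card
              + (F.filter (fun e => ¬ a ∈ e)).card = F.card :=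
            Finset.card_filter_add_card_filter_not _
          have h2 := Finset.card_le_card hsub
          omega
        · push_neg at hA
          obtain ⟨e0, he0⟩ := Finset.nonempty_of_ne_empty hFe
          obtain ⟨a, ha0⟩ := sym2_exists_mem e0
          have ha : a ∈ s := hFs e0 he0 a ha0
          have hd : ∀ v, (F.filter (fun e => v ∈ e)).card ≤ 1 := fun v => by
            have := hA v; omega
          by_cases hB1 : ∃ e1 ∈ F, a ∉ e1
          · obtain ⟨e1, he1, hae1⟩ := hB1
            obtain ⟨b, hb1⟩ := sym2_exists_mem e1
            have hb : b ∈ s := hFs e1 he1 b hb1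
            have hab : a ≠ b := fun h => hae1 (h ▸ hb1)
            have he01 : e0 ≠ e1 := fun h => hae1 (h ▸ ha0)
            have habF : s(a, b) ∉ F := by
              intro hmem
              have h1 : s(a, b) ∈ F.filter (fun e => a ∈ e) :=
                Finset.mem_filter.mpr ⟨hmem, Sym2.mem_mk_left _ _⟩
              have h0 : e0 ∈ F.filter (fun e => a ∈ e) :=
                Finset.mem_filter.mpr ⟨he0, ha0⟩
              have heq : e0 = s(a, b) := Finset.card_le_one.mp (hd a) _ h0 _ h1
              have hb0 : b ∈ e0 := heq ▸ Sym2.mem_mk_right a b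
              have h0' : e0 ∈ F.filter (fun e => b ∈ e) :=
                Finset.mem_filter.mpr ⟨he0, hb0⟩
              have h1' : e1 ∈ F.filter (fun e => b ∈ e) :=
                Finset.mem_filter.mpr ⟨he1, hb1⟩
              exact he01 (Finset.card_le_one.mp (hd b) _ h0' _ h1')
            refine ⟨a, ha, b, hb, hab, habF, Or.inl ?_⟩
            have hsub : F.filter (fun e => a ∉ e ∧ b ∉ e) ⊆ (F.erase e0).erase e1 := by
              intro e he
              obtain ⟨heF, hane, hbne⟩ := Finset.mem_filter.mp he
              exact Finset.mem_erase.mpr ⟨fun h => hbne (h ▸ hb1),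
                Finset.mem_erase.mpr ⟨fun h => hane (h ▸ ha0), heF⟩⟩
            have hc2 : ((F.erase e0).erase e1).card = F.card - 1 - 1 := by
              rw [Finset.card_erase_of_mem (Finset.mem_erase.mpr ⟨he01.symm, he1⟩),
                Finset.card_erase_of_mem he0]
            have h3 := Finset.card_le_card hsub
            have hF2 : 2 ≤ F.card :=
              Finset.one_lt_card_iff.mpr ⟨e0, e1, he0, he1, he01⟩
            omega
          · push_neg at hB1
            obtain ⟨b, hbs, hbF⟩ := exists_good_partner s F a hcF
            refine ⟨a, ha, b, Finset.mem_of_mem_erase hbs,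
              Ne.symm (Finset.mem_erase.mp hbs).1, hbF, Or.inr ?_⟩
            rw [Finset.filter_eq_empty_iff]
            intro e he
            rintro ⟨h1, -⟩
            exact h1 (hB1 e he)

private lemma hasGood_of_small {n : ℕ} (hn : Even n) (F : Finset (Sym2 (Fin n)))
    (hle : F.card + 2 ≤ n) :
    ((⊤ : SimpleGraph (Fin n)).deleteEdges ↑F).HasGoodMatching := by
  obtain ⟨t, ht⟩ := hn
  obtain ⟨P, hPF, hPd, -, hPu⟩ := key t Finset.univ F
    (by simp only [Finset.card_univ, Fintype.card_fin]; omega)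
    (by intros; exact Finset.mem_univ _)
    (Or.inl (by simp only [Finset.card_univ, Fintype.card_fin]; omega))
  left
  refine ⟨{ verts := Set.univ
            Adj := fun x y => s(x, y) ∈ P
            adj_sub := fun {v w} h => ?_
            edge_vert := fun _ => Set.mem_univ _
            symm := ⟨fun x y (h : s(x, y) ∈ P) => show s(y, x) ∈ P by rwa [Sym2.eq_swap]⟩ }, ?_, fun v => Set.mem_univ _⟩
  · rw [SimpleGraph.deleteEdges_adj]
    refine ⟨?_, hPF _ h⟩
    have := hPd _ h
    simp only [Sym2.isDiag_iff_proj_eq] at this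
    simpa using this
  · intro v _
    obtain ⟨e, ⟨heP, hve⟩, hu⟩ := hPu v (Finset.mem_univ v)
    obtain ⟨w, rfl⟩ := Sym2.mem_iff_exists.mp hve
    refine ⟨w, heP, ?_⟩
    intro w' hw'
    exact Sym2.congr_right.mp (hu s(v, w') ⟨hw', Sym2.mem_mk_left _ _⟩)

theorem stmt5 (n : ℕ) (hn : Even n) (h2 : 2 ≤ n) :
    (⊤ : SimpleGraph (Fin n)).mp = n - 1 := by
  haveI : NeZero n := ⟨by omega⟩
  set F₀ : Finset (Sym2 (Fin n)) :=
    (Finset.univ.erase (0 : Fin n)).image (fun w => s((0 : Fin n), w)) with hF₀def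
  have hF₀card : F₀.card = n - 1 := by
    rw [hF₀def, Finset.card_image_of_injOn (fun x _ y _ hxy => Sym2.congr_right.mp hxy),
      Finset.card_erase_of_mem (Finset.mem_univ _), Finset.card_univ, Fintype.card_fin]
  have hF₀sub : ↑F₀ ⊆ (⊤ : SimpleGraph (Fin n)).edgeSet := by
    intro e he
    simp only [hF₀def, Finset.coe_image, Set.mem_image, Finset.coe_erase,
      Set.mem_diff, Finset.coe_univ, Set.mem_univ, true_and,
      Set.mem_singleton_iff] at he
    obtain ⟨w, hw, rfl⟩ := he
    rw [SimpleGraph.mem_edgeSet, top_adj]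
    exact fun h => hw h.symm
  have hstar : ∀ M : (((⊤ : SimpleGraph (Fin n)).deleteEdges ↑F₀)).Subgraph,
      M.IsMatching → (0 : Fin n) ∈ M.verts → False := by
    intro M hM h0v
    obtain ⟨w, hw, -⟩ := hM h0v
    have hadj := M.adj_sub hw
    rw [SimpleGraph.deleteEdges_adj] at hadj
    obtain ⟨hadj, hne⟩ := hadj
    rw [top_adj] at hadj
    exact hne (Finset.mem_coe.mpr (Finset.mem_image.mpr
      ⟨w, Finset.mem_erase.mpr ⟨Ne.symm hadj, Finset.mem_univ _⟩, rfl⟩))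
  have hng : ¬ (((⊤ : SimpleGraph (Fin n)).deleteEdges ↑F₀)).HasGoodMatching := by
    rintro (⟨M, hM, hMs⟩ | ⟨M, hM, v, hv⟩)
    · exact hstar M hM (hMs 0)
    · by_cases hv0 : v = 0
      · subst hv0
        haveI : Fintype M.verts := Set.Finite.fintype (Set.toFinite M.verts)
        have heven := hM.even_card
        have hcv : M.verts.toFinset = ({(0 : Fin n)} : Finset (Fin n))ᶜ := by
          rw [Set.toFinset_congr hv, Set.toFinset_compl, Set.toFinset_singleton]
        rw [hcv, Finset.card_compl, Finset.card_singleton, Fintype.card_fin] at heven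
        obtain ⟨k, hk⟩ := heven
        obtain ⟨m, hm⟩ := hn
        omega
      · apply hstar M hM
        rw [hv]
        exact fun h => hv0 (Set.mem_singleton_iff.mp h).symm
  have hmem : (n - 1) ∈ { k | ∃ F : Finset (Sym2 (Fin n)),
      ↑F ⊆ (⊤ : SimpleGraph (Fin n)).edgeSet ∧ F.card = k ∧
      ¬ ((⊤ : SimpleGraph (Fin n)).deleteEdges ↑F).HasGoodMatching } :=
    ⟨F₀, hF₀sub, hF₀card, hng⟩
  rw [SimpleGraph.mp]
  refine le_antisymm (Nat.sInf_le hmem) (le_csInf ⟨_, hmem⟩ ?_)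
  rintro b ⟨F, hFE, hFc, hngF⟩
  by_contra hlt
  push_neg at hlt
  exact hngF (hasGood_of_small hn F (by omega))
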